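/- Let W be a basic localizer on Cat. Let F: A → Cat be a functor (pseudo-functor) on a small category A, let G: A → Cat be another such functor, and let η: F ⟹ G be a natural transformation such that for every object a of A the functor η_a : F(a) → G(a) is in W. Then the induced functor ∫η : ∫F → ∫G between the Grothendieck constructions is in W. -/

import Mathlib

open CategoryTheory CategoryTheory.Limits

universe u

/-- A class of morphisms is weakly saturated if it contains identities,
satisfies 2-out-of-3, and satisfies (WS3). -/
structure IsWeaklySaturated {C : Type*} [Category C] (W : MorphismProperty C) : Prop where
  id_mem : ∀ X : C, W (𝟙 X)
  comp_mem : ∀ ⦃X Y Z : C⦄ (f : X ⟶ Y) (g : Y ⟶ Z), W f → W g → W (f ≫ g)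
  of_comp_left : ∀ ⦃X Y Z : C⦄ (f : X ⟶ Y) (g : Y ⟶ Z), W f → W (f ≫ g) → W g
  of_comp_right : ∀ ⦃X Y Z : C⦄ (f : X ⟶ Y) (g : Y ⟶ Z), W g → W (f ≫ g) → W f
  ws3 : ∀ ⦃X Y : C⦄ (p : Y ⟶ X) (s : X ⟶ Y), s ≫ p = 𝟙 X → W (p ≫ s) → W p

/-- The terminal category, as an object of `Cat`. -/
abbrev Cat.pt : Cat.{u, u} := Cat.of (Discrete PUnit.{u + 1})

/-- A basic localizer (Grothendieck's « localisateur fondamental ») on `Cat`: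
(L1) weak saturation, (L2) categories with a terminal object are aspherical,
(L3) locality over a base via comma categories. -/
structure IsBasicLocalizer (W : MorphismProperty Cat.{u, u}) : Prop where
  weaklySaturated : IsWeaklySaturated W
  terminal : ∀ (I : Cat.{u, u}) [HasTerminal I],
    W (X := I) (Y := Cat.pt.{u}) (Functor.star I).toCatHom
  locality : ∀ ⦃I J K : Cat.{u, u}⦄ (w : I ⟶ J) (v : J ⟶ K),
    (∀ k : K,
      W (X := Cat.of (Comma ((w.toFunctor : ↥I ⥤ ↥J) ⋙ (v.toFunctor : ↥J ⥤ ↥K)) (Functor.fromPUnit.{u} k)))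
        (Y := Cat.of (Comma (v.toFunctor : ↥J ⥤ ↥K) (Functor.fromPUnit.{u} k)))
        ((Comma.preLeft (w.toFunctor : ↥I ⥤ ↥J) (v.toFunctor : ↥J ⥤ ↥K) (Functor.fromPUnit.{u} k)).toCatHom)) →
    W w

namespace BLAux

variable {J : Type u} [Category.{u} J]

/-- The terminal object of `Comma (𝟭 J) (fromPUnit k)`. -/
noncomputable def commaIdTerminal (k : J) :
    IsTerminal (⟨k, ⟨⟨⟩⟩, 𝟙 k⟩ : Comma (𝟭 J) (Functor.fromPUnit.{u} k)) :=
  IsTerminal.ofUniqueHom (fun Y => ⟨Y.hom, 𝟙 _, by simp⟩)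
    (fun Y m => by
      apply CommaMorphism.ext
      · simpa using m.w
      · apply Subsingleton.elim)

/-- A morphism between two categories with terminal objects is in `W`. -/
lemma mem_of_terminal_both {W : MorphismProperty Cat.{u, u}} (hW : IsBasicLocalizer W)
    {I J : Cat.{u, u}} (f : I ⟶ J) (hI : HasTerminal ↥I) (hJ : HasTerminal ↥J) : W f := by
  have t1 := hW.terminal I
  have t2 := hW.terminal J
  refine hW.weaklySaturated.of_comp_right f (Functor.star ↥J).toCatHom t2 ?_
  have e : (f ≫ (Functor.star ↥J).toCatHom : I ⟶ Cat.pt.{u}) = (Functor.star ↥I).toCatHom :=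
    Cat.ext (Functor.punit_ext' _ _)
  rw [e]
  exact t1

/-- A functor whose comma categories over points all have terminal objects is in `W`. -/
lemma aspherical_of_comma_terminal {W : MorphismProperty Cat.{u, u}} (hW : IsBasicLocalizer W)
    {I J : Cat.{u, u}} (u : I ⟶ J)
    (h : ∀ j : ↥J, HasTerminal (Comma (u.toFunctor : ↥I ⥤ ↥J) (Functor.fromPUnit.{u} j))) :
    W u := by
  refine hW.locality u (𝟙 J) (fun k => ?_)
  exact mem_of_terminal_both hW _ (h k) (commaIdTerminal k).hasTerminal

variable {A : Type u} [Category.{u} A]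

lemma eqToHom_comp_map_eqToHom {C D : Type*} [Category C] [Category D] (F : C ⥤ D) {x y : C}
    (f : x ⟶ y) (q : x = y) (hf : f = eqToHom q) {z : D} (p : z = F.obj x) :
    eqToHom p ≫ F.map f = eqToHom (p.trans (congrArg F.obj q)) := by
  subst hf; subst q; simp

lemma eqToHom_comp_map_comp {C D : Type*} [Category C] [Category D] (F : C ⥤ D)
    {x x' y z : C} (e : x = x') (f : x' ⟶ y) (g : y ⟶ z) {w : D} (p : w = F.obj x)
    {v u : D} (p3 : w = v) (p3' : v = F.obj x') (p4 : F.obj y = u) (p4' : u = F.obj y) :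
    eqToHom p ≫ F.map (eqToHom e ≫ f ≫ g) =
      eqToHom p3 ≫ eqToHom p3' ≫ F.map f ≫ eqToHom p4 ≫ eqToHom p4' ≫ F.map g := by
  subst e p3' p4'; simp

lemma eqToHom_comp_eq_of_id {C : Type*} [Category C] (Fn : C ⥤ C) (hF : Fn = 𝟭 C) {S x y : C}
    (f : x ⟶ y) (g : S ⟶ y) (p : S = Fn.obj x) (q : Fn.obj y = y) (r : S = x)
    (hw : (eqToHom p ≫ Fn.map f) ≫ eqToHom q = g ≫ 𝟙 y) : eqToHom r ≫ f = g := by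
  subst hF; simpa using hw

lemma eqToHom_map_comp_eq_of_id {C : Type*} [Category C] (Fn : C ⥤ C) (hF : Fn = 𝟭 C) {S y : C}
    (g : S ⟶ y) (p : S = Fn.obj S) (q : Fn.obj y = y) :
    (eqToHom p ≫ Fn.map g) ≫ eqToHom q = g ≫ 𝟙 y := by
  subst hF; simp

lemma eqToHom_map_comp_eq {C₀ D₁ D₂ E : Type*} [Category C₀] [Category D₁] [Category D₂]
    [Category E] (ηY : C₀ ⥤ D₁) (GY : D₁ ⥤ E) (FY : C₀ ⥤ D₂) (ηa : D₂ ⥤ E) {s t : C₀}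
    (f : s ⟶ t) {u : D₁} (N : u ⟶ ηY.obj s) (p2 : u = ηY.obj s) (hN : N = eqToHom p2)
    {v : D₂} (p4 : v = FY.obj s) {w : E} (p1 : w = GY.obj u) (p3 : w = ηa.obj v)
    (p5 : ηa.obj (FY.obj t) = GY.obj (ηY.obj t))
    (k1 : ηa.obj (FY.obj s) = GY.obj (ηY.obj s)) (k2 : GY.obj (ηY.obj t) = ηa.obj (FY.obj t))
    (key : ηa.map (FY.map f) = eqToHom k1 ≫ GY.map (ηY.map f) ≫ eqToHom k2) :
    eqToHom p1 ≫ GY.map (N ≫ ηY.map f) = eqToHom p3 ≫ ηa.map (eqToHom p4 ≫ FY.map f) ≫ eqToHom p5 := by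
  subst hN p2 p4
  simp [key]

/-- Restriction to the fiber: `Comma (forget H) (fromPUnit a) ⥤ H.obj a`. -/
def fiberRestrict (H : A ⥤ Cat.{u, u}) (a : A) :
    Comma (Grothendieck.forget H) (Functor.fromPUnit.{u} a) ⥤ ↥(H.obj a) where
  obj X := (H.map X.hom).toFunctor.obj X.left.fiber
  map {X Y} φ :=
    eqToHom (by
      have hX : X.hom = φ.left.base ≫ Y.hom := by have hw := φ.w; simp at hw; exact hw.symm
      rw [show H.map X.hom = H.map φ.left.base ≫ H.map Y.hom by rw [hX]; exact H.map_comp _ _]; rfl) ≫ (H.map Y.hom).toFunctor.map φ.left.fiber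
  map_id X := by
    exact (eqToHom_comp_map_eqToHom _ _ _ (Grothendieck.id_fiber _) _).trans (eqToHom_refl _ _)
  map_comp {X Y Z} φ ψ := by
    have hY : Y.hom = ψ.left.base ≫ Z.hom := by have hw := ψ.w; simp at hw; exact hw.symm
    have key := Functor.congr_hom
      (congrArg Cat.Hom.toFunctor (show H.map Y.hom = H.map ψ.left.base ≫ H.map Z.hom by rw [hY]; exact H.map_comp _ _))
      φ.left.fiber
    simp only [Comma.comp_left, Grothendieck.comp_fiber, Functor.map_comp, eqToHom_map,
      Category.assoc, key, Cat.Hom.comp_map]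
    exact eqToHom_comp_map_comp _ _ _ _ _ _ _ _ _

section

variable (H : A ⥤ Cat.{u, u}) (a : A)

/-- The terminal object of `Comma (fiberRestrict H a) (fromPUnit y)`. -/
noncomputable def fiberRestrictTerminal (y : ↥(H.obj a)) :
    IsTerminal (⟨⟨⟨a, y⟩, ⟨⟨⟩⟩, 𝟙 a⟩, ⟨⟨⟩⟩, eqToHom (by simp only [fiberRestrict]; exact congrArg (fun f : H.obj a ⟶ H.obj a => f.toFunctor.obj y) (H.map_id a))⟩ :
      Comma (fiberRestrict H a) (Functor.fromPUnit.{u} y)) := by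
  refine IsTerminal.ofUniqueHom
    (fun X => ⟨⟨⟨X.left.hom, X.hom⟩, 𝟙 _, by exact (Category.comp_id X.left.hom).trans (Category.comp_id X.left.hom).symm⟩, 𝟙 _, by
      dsimp [fiberRestrict]
      exact eqToHom_map_comp_eq_of_id _ (congrArg Cat.Hom.toFunctor (H.map_id a)) _ _ _⟩) ?_
  · intro X m
    apply CommaMorphism.ext
    · apply CommaMorphism.ext
      · have hb : m.left.left.base = X.left.hom := by
            have hw := m.left.w; simp at hw; exact (Category.comp_id _).symm.trans hw
        apply Grothendieck.ext _ _ hb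
        have hw := m.w
        simp only [fiberRestrict, Functor.fromPUnit, Functor.const_obj_map,
          Category.comp_id] at hw
        exact eqToHom_comp_eq_of_id _ (congrArg Cat.Hom.toFunctor (H.map_id a)) _ _ _ _ _ hw
      · apply Subsingleton.elim
    · apply Subsingleton.elim

end

/-- `fiberRestrict` is in any basic localizer. -/
lemma fiberRestrict_mem {W : MorphismProperty Cat.{u, u}} (hW : IsBasicLocalizer W)
    {A : Cat.{u, u}} (H : ↥A ⥤ Cat.{u, u}) (a : ↥A) :
    W (X := Cat.of (Comma (Grothendieck.forget H) (Functor.fromPUnit.{u} a))) (Y := H.obj a)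
      (fiberRestrict H a).toCatHom := by
  refine aspherical_of_comma_terminal hW _ (fun y => ?_)
  exact (fiberRestrictTerminal H a y).hasTerminal

variable {A : Cat.{u, u}} {F G : ↥A ⥤ Cat.{u, u}}

/-- `Comma.preLeft (map η) (forget G)`, with its domain expressed as
`Comma (forget F)` (these agree definitionally). -/
def premap (η : F ⟶ G) (a : ↥A) :
    Comma (Grothendieck.forget F) (Functor.fromPUnit.{u} a) ⥤
      Comma (Grothendieck.forget G) (Functor.fromPUnit.{u} a) :=
  Comma.preLeft (Grothendieck.map η) (Grothendieck.forget G) (Functor.fromPUnit.{u} a)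

lemma fiberRestrict_square (η : F ⟶ G) (a : ↥A) :
    premap η a ⋙ fiberRestrict G a =
      fiberRestrict F a ⋙ ((η.app a).toFunctor : ↥(F.obj a) ⥤ ↥(G.obj a)) := by
  fapply CategoryTheory.Functor.ext
  · intro X
    have := Functor.congr_obj (congrArg Cat.Hom.toFunctor (η.naturality X.hom)) X.left.fiber
    simp only [Cat.Hom.comp_toFunctor, Functor.comp_obj] at this
    exact this.symm
  · intro X Y φ
    have key := Functor.congr_hom (congrArg Cat.Hom.toFunctor (η.naturality Y.hom)) φ.left.fiber
    dsimp at key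
    show eqToHom _ ≫ (G.map Y.hom).toFunctor.map (((Grothendieck.map η).map φ.left).fiber) =
      eqToHom _ ≫ (η.app a).toFunctor.map (eqToHom _ ≫ (F.map Y.hom).toFunctor.map φ.left.fiber) ≫
        eqToHom _
    exact eqToHom_map_comp_eq (η.app Y.left.base).toFunctor (G.map Y.hom).toFunctor
      (F.map Y.hom).toFunctor (η.app a).toFunctor φ.left.fiber _ _
      (Cat.eqToHom_app _ _ (η.naturality φ.left.base).symm _) _ _ _ _ _ _ key

/-- The comma comparison functor is in `W`. -/
lemma premap_mem {W : MorphismProperty Cat.{u, u}} (hW : IsBasicLocalizer W)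
    (η : F ⟶ G) (hm : ∀ a : ↥A, W (η.app a)) (a : ↥A) :
    W (X := Cat.of (Comma (Grothendieck.forget F) (Functor.fromPUnit.{u} a)))
      (Y := Cat.of (Comma (Grothendieck.forget G) (Functor.fromPUnit.{u} a)))
      (premap η a).toCatHom := by
  have hG := fiberRestrict_mem hW G a
  have hF := fiberRestrict_mem hW F a
  refine hW.weaklySaturated.of_comp_right
    (show Cat.of (Comma (Grothendieck.forget F) (Functor.fromPUnit.{u} a)) ⟶
      Cat.of (Comma (Grothendieck.forget G) (Functor.fromPUnit.{u} a)) from (premap η a).toCatHom)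
    (show Cat.of (Comma (Grothendieck.forget G) (Functor.fromPUnit.{u} a)) ⟶ G.obj a
      from (fiberRestrict G a).toCatHom) hG ?_
  show W (X := Cat.of (Comma (Grothendieck.forget F) (Functor.fromPUnit.{u} a)))
    (Y := G.obj a) (premap η a ⋙ fiberRestrict G a).toCatHom
  rw [fiberRestrict_square η a]
  exact hW.weaklySaturated.comp_mem
    (show Cat.of (Comma (Grothendieck.forget F) (Functor.fromPUnit.{u} a)) ⟶ F.obj a
      from (fiberRestrict F a).toCatHom) (η.app a) hF (hm a)

end BLAux

/-- If a natural transformation `η : F ⟶ G` of functors `A ⥤ Cat` is pointwise in a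
basic localizer `W`, then the induced functor `∫F ⥤ ∫G` between the Grothendieck
constructions is in `W`. -/
theorem IsBasicLocalizer.grothendieck_map_mem {W : MorphismProperty Cat.{u, u}}
    (hW : IsBasicLocalizer W) {A : Cat.{u, u}} {F G : ↥A ⥤ Cat.{u, u}}
    (η : F ⟶ G) (h : ∀ a : ↥A, W (η.app a)) :
    W (X := Cat.of (Grothendieck F)) (Y := Cat.of (Grothendieck G))
      (Grothendieck.map η).toCatHom := by
  refine hW.locality (I := Cat.of (Grothendieck F)) (J := Cat.of (Grothendieck G)) (K := A)
    (Grothendieck.map η).toCatHom (Grothendieck.forget G).toCatHom (fun a => ?_)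
  exact BLAux.premap_mem hW η h a
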